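/- Any configuration in LC* is (2m, Δ, S_B*, n−1)-TA time contained: in any execution from such a configuration, each vertex outside S_B* changes its output variables at most Δ times, and the total number of S_B*-TA-disruptions is at most 2m = Σ_v Δ_v. -/

import Mathlib

namespace BFS

variable {V : Type*}

noncomputable def distS (G : SimpleGraph V) (v : V) (S : Set V) : ℕ := sInf (G.dist v '' S)

def IPred (G : SimpleGraph V) (r : V) (B : Set V) (d : ℕ) (ℓ : V → ℕ) : Prop :=
  ∀ v, min d (distS G v (B ∪ {r})) ≤ ℓ v

def SB (G : SimpleGraph V) (r : V) (B : Set V) : Set V :=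
  {v | ∃ b ∈ B, G.dist v b ≤ G.dist v r}

def SBstar (G : SimpleGraph V) (r : V) (B : Set V) : Set V :=
  {v | ∃ b ∈ B, G.dist v b < G.dist v r}

def IsBFSPath (G : SimpleGraph V) (r : V) (B : Set V) (ℓ : V → ℕ)
    (prnt : V → Option V) (k : ℕ) (w : ℕ → V) : Prop :=
  1 ≤ k ∧ prnt (w 0) = none ∧ ℓ (w 0) = 0 ∧ w 0 ∈ B ∪ {r} ∧
  ∀ i, 1 ≤ i → i ≤ k →
    prnt (w i) = some (w (i - 1)) ∧ G.Adj (w (i - 1)) (w i) ∧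
    ℓ (w i) = ℓ (w (i - 1)) + 1 ∧
    ℓ (w (i - 1)) = sInf (ℓ '' {u | G.Adj (w i) u})

def Spec (G : SimpleGraph V) (r : V) (B : Set V) (ℓ : V → ℕ)
    (prnt : V → Option V) (v : V) : Prop :=
  (v = r → prnt v = none ∧ ℓ v = 0) ∧
  (v ≠ r → ∃ k w, IsBFSPath G r B ℓ prnt k w ∧ w k = v)

/-- A configuration: each vertex has a level and a parent pointer. -/
structure Config (V : Type*) where
  lvl : V → ℕ
  prnt : V → Option V

/-- The guard of the `min+1` protocol. The root is enabled when its output is not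
`(⊥, 0)`; another process is enabled unless its parent is a neighbour with minimal
level among the neighbours and its own level is the parent's level plus one. -/
def Enabled (G : SimpleGraph V) (r : V) (ρ : Config V) (v : V) : Prop :=
  (v = r → (ρ.prnt v ≠ none ∨ ρ.lvl v ≠ 0)) ∧
  (v ≠ r → ¬ ∃ u, ρ.prnt v = some u ∧ G.Adj v u ∧ ρ.lvl v = ρ.lvl u + 1 ∧
      ∀ q, G.Adj v q → ρ.lvl u ≤ ρ.lvl q)

/-- The set of neighbours of `v` with minimal level. -/
def minNbrs (G : SimpleGraph V) (ρ : Config V) (v : V) : Set V :=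
  {q | G.Adj v q ∧ ∀ q', G.Adj v q' → ρ.lvl q ≤ ρ.lvl q'}

/-- One step of the `min+1` protocol where the set `A` of processes is activated:
non-activated correct processes keep their state, the root resets its output, an
enabled activated correct process adopts some minimal-level neighbour as parent,
Byzantine processes behave arbitrarily. -/
def StepM (G : SimpleGraph V) (r : V) (B : Set V) (ρ ρ' : Config V) (A : Set V) : Prop :=
  ∀ v, v ∉ B →
    (v ∉ A → ρ'.lvl v = ρ.lvl v ∧ ρ'.prnt v = ρ.prnt v) ∧
    (v ∈ A →
      (v = r → ρ'.lvl v = 0 ∧ ρ'.prnt v = none) ∧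
      (v ≠ r → (Enabled G r ρ v →
          ∃ p ∈ minNbrs G ρ v, ρ'.prnt v = some p ∧ ρ'.lvl v = ρ.lvl p + 1) ∧
        (¬ Enabled G r ρ v → ρ'.lvl v = ρ.lvl v ∧ ρ'.prnt v = ρ.prnt v)))

/-- An execution of the `min+1` protocol along the schedule `A`. -/
def IsExecM (G : SimpleGraph V) (r : V) (B : Set V)
    (e : ℕ → Config V) (A : ℕ → Set V) : Prop :=
  ∀ n, StepM G r B (e n) (e (n + 1)) (A n)

/-- Fairness: a correct process that is infinitely often enabled is infinitely
often activated. -/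
def Fair (G : SimpleGraph V) (r : V) (B : Set V)
    (e : ℕ → Config V) (A : ℕ → Set V) : Prop :=
  ∀ v, v ∉ B → (∀ n, ∃ m, n ≤ m ∧ Enabled G r (e m) v) → ∀ n, ∃ m, n ≤ m ∧ v ∈ A m

/-- Round-robin choice: `p` is the next element of `A` (w.r.t. the numbering `num`)
strictly after index `c`, cyclically. -/
def IsChoice (num : V → ℕ) (c : ℕ) (A : Set V) (p : V) : Prop :=
  p ∈ A ∧
  ((∃ a ∈ A, c < num a) → (c < num p ∧ ∀ a ∈ A, c < num a → num p ≤ num a)) ∧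
  ((∀ a ∈ A, num a ≤ c) → ∀ a ∈ A, num p ≤ num a)

/-- Index of the current parent of `v` (0 if it has no parent). -/
def currIdx (num : V → ℕ) (ρ : Config V) (v : V) : ℕ := (ρ.prnt v).elim 0 num

/-- One step of the `SSBFS` protocol (round-robin variant of `min+1`). -/
def StepRR (G : SimpleGraph V) (r : V) (B : Set V) (num : V → ℕ)
    (ρ ρ' : Config V) (A : Set V) : Prop :=
  ∀ v, v ∉ B →
    (v ∉ A → ρ'.lvl v = ρ.lvl v ∧ ρ'.prnt v = ρ.prnt v) ∧
    (v ∈ A →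
      (v = r → ρ'.lvl v = 0 ∧ ρ'.prnt v = none) ∧
      (v ≠ r → (Enabled G r ρ v →
          ∃ p, IsChoice num (currIdx num ρ v) (minNbrs G ρ v) p ∧
            ρ'.prnt v = some p ∧ ρ'.lvl v = ρ.lvl p + 1) ∧
        (¬ Enabled G r ρ v → ρ'.lvl v = ρ.lvl v ∧ ρ'.prnt v = ρ.prnt v)))

/-- An execution of the `SSBFS` protocol along the schedule `A`. -/
def IsExecRR (G : SimpleGraph V) (r : V) (B : Set V) (num : V → ℕ)
    (e : ℕ → Config V) (A : ℕ → Set V) : Prop :=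
  ∀ n, StepRR G r B num (e n) (e (n + 1)) (A n)

end BFS

namespace BFS

variable {V : Type*}

/-- A configuration is `S_B*`-legitimate: every `S_B*`-correct process satisfies
the specification. -/
def LegitStar (G : SimpleGraph V) (r : V) (B : Set V) (ρ : Config V) : Prop :=
  ∀ v, v ∉ B → v ∉ SBstar G r B → Spec G r B ρ.lvl ρ.prnt v

/-- A configuration is `S_B*`-stable: as long as Byzantine processes take no action,
no `S_B*`-correct process ever changes its output variables. -/
def StableStar (G : SimpleGraph V) (r : V) (B : Set V) (num : V → ℕ)
    (ρ : Config V) : Prop :=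
  ∀ (e : ℕ → Config V) (A : ℕ → Set V), IsExecRR G r B num e A → e 0 = ρ →
    (∀ n, ∀ b ∈ B, (e (n + 1)).lvl b = (e n).lvl b ∧ (e (n + 1)).prnt b = (e n).prnt b) →
    ∀ v, v ∉ B → v ∉ SBstar G r B → ∀ n, (e n).lvl v = ρ.lvl v ∧ (e n).prnt v = ρ.prnt v

/-- The portion of execution from time `n` to time `t` is a `S_B*`-TA-disruption. -/
def IsDisruption (G : SimpleGraph V) (r : V) (B : Set V) (num : V → ℕ)
    (e : ℕ → Config V) (n t : ℕ) : Prop :=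
  n < t ∧ LegitStar G r B (e n) ∧ StableStar G r B num (e n) ∧
  LegitStar G r B (e t) ∧ StableStar G r B num (e t) ∧
  (∀ s, n < s → s < t → ¬ (LegitStar G r B (e s) ∧ StableStar G r B num (e s))) ∧
  ∃ i v, n ≤ i ∧ i < t ∧ v ∉ B ∧ v ∉ SBstar G r B ∧
    ((e (i + 1)).lvl v ≠ (e i).lvl v ∨ (e (i + 1)).prnt v ≠ (e i).prnt v)

end BFS

section Aux
open BFS
variable {V : Type*} {G : SimpleGraph V}

lemma distS_le' {S : Set V} {w : V} (v : V) (hw : w ∈ S) : distS G v S ≤ G.dist v w :=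
  Nat.sInf_le ⟨w, hw, rfl⟩

lemma r_not_SBstar (G : SimpleGraph V) (r : V) (B : Set V) : r ∉ SBstar G r B := by
  rintro ⟨b, hb, hlt⟩
  simp [SimpleGraph.dist_self] at hlt

lemma distS_eq_dist (hG : G.Connected) {r : V} {B : Set V} {v : V} (hv : v ∉ SBstar G r B) :
    distS G v (B ∪ {r}) = G.dist v r := by
  refine le_antisymm (distS_le' v (by simp))
    (le_csInf ⟨G.dist v r, ⟨r, by simp, rfl⟩⟩ ?_)
  rintro _ ⟨w, hw, rfl⟩
  rcases hw with hw | hw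
  · by_contra h
    push_neg at h
    exact hv ⟨w, hw, h⟩
  · simp only [Set.mem_singleton_iff] at hw
    subst hw
    exact le_rfl

lemma distS_lip (hG : G.Connected) {r : V} {B : Set V} {v q : V} (h : G.Adj v q) :
    distS G v (B ∪ {r}) ≤ distS G q (B ∪ {r}) + 1 := by
  have hne : (G.dist q '' (B ∪ {r})).Nonempty := ⟨_, ⟨r, by simp, rfl⟩⟩
  obtain ⟨w, hw, hwd⟩ : ∃ w ∈ B ∪ {r}, G.dist q w = distS G q (B ∪ {r}) := Nat.sInf_mem hne
  calc distS G v (B ∪ {r}) ≤ G.dist v w := distS_le' v hw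
    _ ≤ G.dist v q + G.dist q w := hG.dist_triangle
    _ = distS G q (B ∪ {r}) + 1 := by
        rw [hwd, SimpleGraph.dist_eq_one_iff_adj.2 h]; omega

lemma good_nbr (hG : G.Connected) {r : V} {B : Set V} (hrB : r ∉ B) {v : V}
    (hv : v ∉ SBstar G r B) (hvr : v ≠ r) :
    ∃ u, G.Adj v u ∧ u ∉ B ∧ u ∉ SBstar G r B ∧ G.dist u r + 1 = G.dist v r := by
  have hdist : G.dist v r ≠ 0 :=
    SimpleGraph.dist_ne_zero_iff_ne_and_reachable.2 ⟨hvr, hG v r⟩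
  obtain ⟨p, hp⟩ := SimpleGraph.exists_walk_of_dist_ne_zero hdist
  cases p with
  | nil => exact absurd hp.symm hdist
  | @cons _ u _ hadj q =>
    have h1 : G.dist u r ≤ q.length := SimpleGraph.dist_le q
    have h2 : G.dist v r ≤ G.dist v u + G.dist u r := hG.dist_triangle
    have hvu : G.dist v u = 1 := SimpleGraph.dist_eq_one_iff_adj.2 hadj
    simp only [SimpleGraph.Walk.length_cons] at hp
    have heq : G.dist u r + 1 = G.dist v r := by omega
    have hustar : u ∉ SBstar G r B := by
      rintro ⟨b, hb, hlt⟩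
      refine hv ⟨b, hb, ?_⟩
      have := hG.dist_triangle (u := v) (v := u) (w := b)
      omega
    have huB : u ∉ B := by
      intro huB
      have hur0 : G.dist u r ≠ 0 := by
        rw [SimpleGraph.dist_ne_zero_iff_ne_and_reachable]
        exact ⟨fun h => hrB (h ▸ huB), hG u r⟩
      exact hustar ⟨u, huB, by rw [SimpleGraph.dist_self]; omega⟩
    exact ⟨u, hadj, huB, hustar, heq⟩

end Aux

section Core
open BFS
open scoped Classical

/-- Round-robin key: neighbours with number above `num u` come first, then (shifted
by `M`) those with number at most `num u`; `u` itself gets the maximal key. -/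
def rrkey {V : Type*} (num : V → ℕ) (u : V) (M : ℕ) (p : V) : ℕ :=
  if num u < num p then num p else num p + M

theorem core_bound {V : Type*} [Fintype V] [DecidableEq V] (G : SimpleGraph V)
    [DecidableRel G.Adj] (hG : G.Connected)
    (r : V) (B : Set V) (hrB : r ∉ B) (D : ℕ) (hD : ∀ u w, G.dist u w ≤ D)
    (num : V → ℕ) (hnum : Function.Injective num)
    (e : ℕ → BFS.Config V) (A : ℕ → Set V) (hexec : BFS.IsExecRR G r B num e A)
    (hleg : BFS.LegitStar G r B (e 0))
    (hI : BFS.IPred G r B D (e 0).lvl) :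
    ∀ v, v ∉ B → v ∉ BFS.SBstar G r B → ∀ n,
        ((Finset.range n).filter
          (fun i => (e (i + 1)).lvl v ≠ (e i).lvl v ∨ (e (i + 1)).prnt v ≠ (e i).prnt v)).card
        ≤ G.degree v := by
  -- IPred is invariant
  have hIP : ∀ n, BFS.IPred G r B D (e n).lvl := by
    intro n
    induction n with
    | zero => exact hI
    | succ n ih =>
      intro v
      by_cases hvB : v ∈ B
      · have h0 : distS G v (B ∪ {r}) = 0 := by
          have := distS_le' (G := G) v (Set.mem_union_left {r} hvB)
          rw [SimpleGraph.dist_self] at this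
          omega
        rw [h0]
        simp
      · obtain ⟨hnotA, hA⟩ := hexec n v hvB
        by_cases hAn : v ∈ A n
        · obtain ⟨hr, hnr⟩ := hA hAn
          by_cases hvr : v = r
          · subst hvr
            have h0 : distS G v (B ∪ {v}) = 0 := by
              have := distS_le' (G := G) v (show v ∈ B ∪ {v} by simp)
              rw [SimpleGraph.dist_self] at this
              omega
            rw [h0, (hr rfl).1]
            simp
          · obtain ⟨hen, hnen⟩ := hnr hvr
            by_cases hE : Enabled G r (e n) v
            · obtain ⟨p, hch, hp', hl'⟩ := hen hE
              have hadj : G.Adj v p := hch.1.1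
              have h1 := ih p
              have h2 := distS_lip (G := G) hG (r := r) (B := B) hadj
              rw [hl']
              omega
            · rw [(hnen hE).1]; exact ih v
        · rw [(hnotA hAn).1]; exact ih v
  -- the root's output is constant
  have hroot : ∀ n, (e n).lvl r = 0 ∧ (e n).prnt r = none := by
    intro n
    induction n with
    | zero =>
      obtain ⟨h1, _⟩ := hleg r hrB (r_not_SBstar G r B)
      exact ⟨(h1 rfl).2, (h1 rfl).1⟩
    | succ n ih =>
      obtain ⟨hnotA, hA⟩ := hexec n r hrB
      by_cases hAn : r ∈ A n
      · exact ⟨((hA hAn).1 rfl).1, ((hA hAn).1 rfl).2⟩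
      · obtain ⟨h1, h2⟩ := hnotA hAn
        rw [h1, h2]; exact ih
  -- levels at time 0
  have hbase : ∀ L v, v ∉ B → v ∉ BFS.SBstar G r B → G.dist v r = L → (e 0).lvl v = L := by
    intro L
    induction L using Nat.strong_induction_on with
    | _ L ih =>
      intro v hvB hvS hL
      rcases Nat.eq_zero_or_pos L with h0 | hpos
      · subst h0
        have hvr : v = r := hG.dist_eq_zero_iff.mp hL
        subst hvr
        exact ((hleg v hvB hvS).1 rfl).2
      · have hvr : v ≠ r := by
          rintro rfl
          rw [SimpleGraph.dist_self] at hL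
          omega
        obtain ⟨u, hadj, huB, huS, hur⟩ := good_nbr hG hrB hvS hvr
        have hu0 : (e 0).lvl u = L - 1 := ih (L - 1) (by omega) u huB huS (by omega)
        obtain ⟨k, w, hbfs, hwk⟩ := (hleg v hvB hvS).2 hvr
        obtain ⟨hk1, -, -, -, hstep⟩ := hbfs
        obtain ⟨-, -, hlv, hinf⟩ := hstep k hk1 le_rfl
        rw [hwk] at hlv hinf
        have hle : (e 0).lvl (w (k - 1)) ≤ (e 0).lvl u := by
          rw [hinf]
          exact Nat.sInf_le ⟨u, hadj, rfl⟩
        have hlow := hI v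
        rw [distS_eq_dist hG hvS, hL] at hlow
        have hDL : L ≤ D := hL ▸ hD v r
        omega
  -- levels at all times
  have hlvl : ∀ n v, v ∉ B → v ∉ BFS.SBstar G r B → (e n).lvl v = G.dist v r := by
    intro n
    induction n with
    | zero => intro v hvB hvS; exact hbase _ v hvB hvS rfl
    | succ n ih =>
      intro v hvB hvS
      obtain ⟨hnotA, hA⟩ := hexec n v hvB
      by_cases hAn : v ∈ A n
      · obtain ⟨hr, hnr⟩ := hA hAn
        by_cases hvr : v = r
        · subst hvr
          rw [(hr rfl).1, SimpleGraph.dist_self]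
        · obtain ⟨hen, hnen⟩ := hnr hvr
          by_cases hE : Enabled G r (e n) v
          · obtain ⟨p, hch, hp', hl'⟩ := hen hE
            obtain ⟨⟨hadjp, hmin⟩, -, -⟩ := hch
            obtain ⟨u, hadj, huB, huS, hur⟩ := good_nbr hG hrB hvS hvr
            have hu := ih u huB huS
            have hple : (e n).lvl p ≤ (e n).lvl u := hmin u hadj
            have hplow := hIP n p
            have hlip := distS_lip (G := G) hG (r := r) (B := B) hadjp
            rw [distS_eq_dist hG hvS] at hlip
            have hDv := hD v r
            rw [hl']
            omega
          · rw [(hnen hE).1]; exact ih v hvB hvS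
      · rw [(hnotA hAn).1]; exact ih v hvB hvS
  -- lower bound on neighbours' levels
  have hnbrlow : ∀ n (v : V), v ∉ BFS.SBstar G r B → ∀ q, G.Adj v q →
      G.dist v r ≤ (e n).lvl q + 1 := by
    intro n v hvS q hq
    have h1 := hIP n q
    have h2 := distS_lip (G := G) hG (r := r) (B := B) hq
    rw [distS_eq_dist hG hvS] at h2
    have := hD v r
    omega
  -- the good neighbour is always a minimal neighbour
  have humem : ∀ n {v u : V}, v ∉ B → v ∉ BFS.SBstar G r B → G.Adj v u → u ∉ B →
      u ∉ BFS.SBstar G r B → G.dist u r + 1 = G.dist v r → u ∈ minNbrs G (e n) v := by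
    intro n v u hvB hvS hadj huB huS hur
    refine ⟨hadj, fun q hq => ?_⟩
    have := hnbrlow n v hvS q hq
    rw [hlvl n u huB huS]
    omega
  -- once the parent is the good neighbour, v is disabled
  have hdisabled : ∀ n {v u : V}, v ∉ B → v ∉ BFS.SBstar G r B → v ≠ r → G.Adj v u →
      u ∉ B → u ∉ BFS.SBstar G r B → G.dist u r + 1 = G.dist v r →
      (e n).prnt v = some u → ¬ Enabled G r (e n) v := by
    intro n v u hvB hvS hvr hadj huB huS hur hprnt hE
    refine hE.2 hvr ⟨u, hprnt, hadj, ?_, fun q hq => ?_⟩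
    · rw [hlvl n v hvB hvS, hlvl n u huB huS]; omega
    · rw [hlvl n u huB huS]
      have := hnbrlow n v hvS q hq
      omega
  -- analysis of a change
  have hchange : ∀ i {v : V}, v ∉ B → v ∉ BFS.SBstar G r B → v ≠ r →
      ((e (i + 1)).lvl v ≠ (e i).lvl v ∨ (e (i + 1)).prnt v ≠ (e i).prnt v) →
      Enabled G r (e i) v ∧ ∃ p, IsChoice num (currIdx num (e i) v) (minNbrs G (e i) v) p ∧
        (e (i + 1)).prnt v = some p := by
    intro i v hvB hvS hvr hne
    obtain ⟨hnotA, hA⟩ := hexec i v hvB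
    by_cases hAn : v ∈ A i
    · obtain ⟨-, hnr⟩ := hA hAn
      obtain ⟨hen, hnen⟩ := hnr hvr
      by_cases hE : Enabled G r (e i) v
      · obtain ⟨p, h1, h2, -⟩ := hen hE
        exact ⟨hE, p, h1, h2⟩
      · obtain ⟨h1, h2⟩ := hnen hE
        rcases hne with h | h
        exacts [absurd h1 h, absurd h2 h]
    · obtain ⟨h1, h2⟩ := hnotA hAn
      rcases hne with h | h
      exacts [absurd h1 h, absurd h2 h]
  -- main counting
  intro v hvB hvS n
  by_cases hvr : v = r
  · subst hvr
    have hempty : ((Finset.range n).filter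
        (fun i => (e (i + 1)).lvl v ≠ (e i).lvl v ∨ (e (i + 1)).prnt v ≠ (e i).prnt v)) = ∅ := by
      apply Finset.filter_eq_empty_iff.mpr
      intro i _
      push_neg
      constructor
      · rw [(hroot (i + 1)).1, (hroot i).1]
      · rw [(hroot (i + 1)).2, (hroot i).2]
    rw [hempty]
    simp
  · obtain ⟨u, hadj, huB, huS, hur⟩ := good_nbr hG hrB hvS hvr
    set M := (Finset.univ.sup num) + 1 with hMdef
    have hM : ∀ x : V, num x < M := fun x => Nat.lt_succ_of_le (Finset.le_sup (Finset.mem_univ x))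
    -- key strictly increases between changes
    have hmain : ∀ d i i', i' - i ≤ d → i < i' →
        ((e (i + 1)).lvl v ≠ (e i).lvl v ∨ (e (i + 1)).prnt v ≠ (e i).prnt v) →
        ((e (i' + 1)).lvl v ≠ (e i').lvl v ∨ (e (i' + 1)).prnt v ≠ (e i').prnt v) →
        ∀ p p', (e (i + 1)).prnt v = some p → (e (i' + 1)).prnt v = some p' →
          rrkey num u M p < rrkey num u M p' := by
      intro d
      induction d with
      | zero =>
        intro i i' h1 h2
        exact ((by omega : False)).elim
      | succ d ih =>
        intro i i' hle hlt hci hci' p p' hp hp'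
        by_cases hmid : ∃ j, i < j ∧ j < i' ∧
            ((e (j + 1)).lvl v ≠ (e j).lvl v ∨ (e (j + 1)).prnt v ≠ (e j).prnt v)
        · obtain ⟨j, hij, hji', hcj⟩ := hmid
          obtain ⟨-, q, -, hq⟩ := hchange j hvB hvS hvr hcj
          exact lt_trans (ih i j (by omega) hij hci hcj p q hp hq)
            (ih j i' (by omega) hji' hcj hci' q p' hq hp')
        · push_neg at hmid
          -- the parent is constant on [i+1, i']
          have hconst : ∀ k, i + 1 + k ≤ i' → (e (i + 1 + k)).prnt v = some p := by
            intro k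
            induction k with
            | zero => intro _; simpa using hp
            | succ k ihk =>
              intro hk
              have hnc := hmid (i + 1 + k) (by omega) (by omega)
              have heq : (e (i + 1 + k + 1)).prnt v = (e (i + 1 + k)).prnt v := hnc.2
              have : i + 1 + (k + 1) = i + 1 + k + 1 := by omega
              rw [this, heq]
              exact ihk (by omega)
          have hpi' : (e i').prnt v = some p := by
            have := hconst (i' - i - 1) (by omega)
            rwa [show i + 1 + (i' - i - 1) = i' from by omega] at this
          obtain ⟨hEn, q', hqc, hq'⟩ := hchange i' hvB hvS hvr hci'
          have hpu : p ≠ u := by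
            rintro rfl
            exact hdisabled i' hvB hvS hvr hadj huB huS hur hpi' hEn
          have hq'p' : q' = p' := by
            rw [hq'] at hp'
            exact Option.some_injective _ hp'
          rw [hq'p'] at hqc
          obtain ⟨hp'mem, hch1, hch2⟩ := hqc
          have hcurr : currIdx num (e i') v = num p := by
            rw [currIdx, hpi']
            rfl
          rw [hcurr] at hch1 hch2
          have humem' := humem i' hvB hvS hadj huB huS hur
          rcases lt_trichotomy (num p) (num u) with hlt' | heq' | hgt'
          · obtain ⟨h1, h2⟩ := hch1 ⟨u, humem', hlt'⟩
            have hp'le : num p' ≤ num u := h2 u humem' hlt'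
            unfold rrkey
            rw [if_neg (by omega), if_neg (by omega)]
            omega
          · exact absurd (hnum heq') hpu
          · by_cases hex : ∃ a ∈ minNbrs G (e i') v, num p < num a
            · obtain ⟨h1, -⟩ := hch1 hex
              unfold rrkey
              rw [if_pos hgt', if_pos (by omega)]
              omega
            · push_neg at hex
              have h3 := hch2 hex u humem'
              unfold rrkey
              rw [if_pos hgt', if_neg (by omega)]
              have := hM p
              omega
    -- injection into neighbours
    set f : ℕ → V := fun i => ((e (i + 1)).prnt v).elim v id with hfdef
    have hfval : ∀ i p, (e (i + 1)).prnt v = some p → f i = p := by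
      intro i p hp
      rw [hfdef]
      simp [hp]
    have hmem : ∀ i ∈ (Finset.range n).filter
        (fun i => (e (i + 1)).lvl v ≠ (e i).lvl v ∨ (e (i + 1)).prnt v ≠ (e i).prnt v),
        f i ∈ G.neighborFinset v := by
      intro i hi
      obtain ⟨-, hc⟩ := Finset.mem_filter.mp hi
      obtain ⟨-, p, hpc, hp⟩ := hchange i hvB hvS hvr hc
      rw [hfval i p hp, SimpleGraph.mem_neighborFinset]
      exact hpc.1.1
    have hinj : Set.InjOn f ((Finset.range n).filter
        (fun i => (e (i + 1)).lvl v ≠ (e i).lvl v ∨ (e (i + 1)).prnt v ≠ (e i).prnt v)) := by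
      intro a ha b hb hab
      obtain ⟨-, hca⟩ := Finset.mem_filter.mp ha
      obtain ⟨-, hcb⟩ := Finset.mem_filter.mp hb
      obtain ⟨-, pa, -, hpa⟩ := hchange a hvB hvS hvr hca
      obtain ⟨-, pb, -, hpb⟩ := hchange b hvB hvS hvr hcb
      rw [hfval a pa hpa, hfval b pb hpb] at hab
      subst hab
      by_contra hne2
      rcases Ne.lt_or_gt hne2 with h | h
      · exact absurd (hmain b a b (by omega) h hca hcb pa pa hpa hpb) (lt_irrefl _)
      · exact absurd (hmain a b a (by omega) h hcb hca pa pa hpb hpa) (lt_irrefl _)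
    calc ((Finset.range n).filter
        (fun i => (e (i + 1)).lvl v ≠ (e i).lvl v ∨ (e (i + 1)).prnt v ≠ (e i).prnt v)).card
        ≤ (G.neighborFinset v).card := Finset.card_le_card_of_injOn f hmem hinj
      _ = G.degree v := G.card_neighborFinset_eq_degree v

end Core


open BFS in
open scoped Classical in
/-- Any configuration of `LC*` is `(2m, Δ, S_B*, n−1)`-TA time contained: in any
execution of `SSBFS` from such a configuration, each `S_B*`-correct vertex changes
its output variables at most `Δ` times, and the number of `S_B*`-TA-disruptions is
at most `2m`. -/
theorem stmt11 {V : Type*} [Fintype V] [DecidableEq V] (G : SimpleGraph V)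
    [DecidableRel G.Adj] (hG : G.Connected)
    (r : V) (B : Set V) (hrB : r ∉ B) (D : ℕ) (hD : ∀ u w, G.dist u w ≤ D)
    (num : V → ℕ) (hnum : Function.Injective num)
    (e : ℕ → BFS.Config V) (A : ℕ → Set V) (hexec : BFS.IsExecRR G r B num e A)
    (hleg : BFS.LegitStar G r B (e 0))
    (hI : BFS.IPred G r B D (e 0).lvl) :
    (∀ v, v ∉ B → v ∉ BFS.SBstar G r B → ∀ n,
        ((Finset.range n).filter
          (fun i => (e (i + 1)).lvl v ≠ (e i).lvl v ∨ (e (i + 1)).prnt v ≠ (e i).prnt v)).card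
        ≤ G.maxDegree) ∧
    (∀ n, ((Finset.range n).filter
        (fun i => ∃ t, BFS.IsDisruption G r B num e i t)).card
      ≤ 2 * G.edgeFinset.card) := by
  have hcore := core_bound G hG r B hrB D hD num hnum e A hexec hleg hI
  constructor
  · intro v hvB hvS n
    exact le_trans (hcore v hvB hvS n) (G.degree_le_maxDegree v)
  · intro n
    -- choice of a disruption end and of a witness change index
    set T : ℕ → ℕ := fun i =>
      if h : ∃ t, IsDisruption G r B num e i t then h.choose else 0 with hTdef
    have hT : ∀ i, (∃ t, IsDisruption G r B num e i t) → IsDisruption G r B num e i (T i) := by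
      intro i h
      rw [hTdef]
      simp only [dif_pos h]
      exact h.choose_spec
    set J : ℕ → ℕ := fun i =>
      if h : ∃ t, IsDisruption G r B num e i t then
        (h.choose_spec.2.2.2.2.2.2).choose else 0 with hJdef
    have hJ : ∀ i, ∀ h : (∃ t, IsDisruption G r B num e i t),
        ∃ v, i ≤ J i ∧ J i < T i ∧ v ∉ B ∧ v ∉ SBstar G r B ∧
          ((e (J i + 1)).lvl v ≠ (e (J i)).lvl v ∨ (e (J i + 1)).prnt v ≠ (e (J i)).prnt v) := by
      intro i h
      rw [hJdef, hTdef]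
      simp only [dif_pos h]
      exact (h.choose_spec.2.2.2.2.2.2).choose_spec
    set F := (Finset.range n).filter (fun i => ∃ t, IsDisruption G r B num e i t) with hFdef
    have hFd : ∀ i ∈ F, ∃ t, IsDisruption G r B num e i t := by
      intro i hi
      exact (Finset.mem_filter.mp hi).2
    -- the ends are separated: for i < i' in F, T i ≤ i'
    have hsep : ∀ i ∈ F, ∀ i' ∈ F, i < i' → T i ≤ i' := by
      intro i hi i' hi' hlt
      by_contra hcon
      push_neg at hcon
      have hd := hT i (hFd i hi)
      have hd' := hT i' (hFd i' hi')
      exact hd.2.2.2.2.2.1 i' hlt hcon ⟨hd'.2.1, hd'.2.2.1⟩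
    -- J is strictly monotone on F, hence injective
    have hJmono : ∀ i ∈ F, ∀ i' ∈ F, i < i' → J i < J i' := by
      intro i hi i' hi' hlt
      obtain ⟨v, h1, h2, -⟩ := hJ i (hFd i hi)
      obtain ⟨v', h1', -⟩ := hJ i' (hFd i' hi')
      have := hsep i hi i' hi' hlt
      omega
    -- the target finset
    set N' := F.sup T with hN'def
    set Tgt := (Finset.range N').filter (fun j => ∃ v, v ∉ B ∧ v ∉ SBstar G r B ∧
        ((e (j + 1)).lvl v ≠ (e j).lvl v ∨ (e (j + 1)).prnt v ≠ (e j).prnt v)) with hTgtdef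
    have hmaps : ∀ i ∈ F, J i ∈ Tgt := by
      intro i hi
      obtain ⟨v, h1, h2, h3, h4, h5⟩ := hJ i (hFd i hi)
      rw [hTgtdef]
      refine Finset.mem_filter.mpr ⟨Finset.mem_range.mpr ?_, v, h3, h4, h5⟩
      exact lt_of_lt_of_le h2 (Finset.le_sup hi)
    have hinj : Set.InjOn J F := by
      intro a ha b hb hab
      by_contra hne
      rcases Ne.lt_or_gt hne with h | h
      · exact absurd hab (Nat.ne_of_lt (hJmono a ha b hb h))
      · exact absurd hab.symm (Nat.ne_of_lt (hJmono b hb a ha h))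
    have hcard1 : F.card ≤ Tgt.card := Finset.card_le_card_of_injOn J hmaps hinj
    -- bound the target by the sum of degrees
    set S := Finset.univ.filter (fun v : V => v ∉ B ∧ v ∉ SBstar G r B) with hSdef
    have hsub : Tgt ⊆ S.biUnion (fun v => (Finset.range N').filter
        (fun j => (e (j + 1)).lvl v ≠ (e j).lvl v ∨ (e (j + 1)).prnt v ≠ (e j).prnt v)) := by
      intro j hj
      rw [hTgtdef] at hj
      obtain ⟨hjr, v, h1, h2, h3⟩ := Finset.mem_filter.mp hj
      refine Finset.mem_biUnion.mpr ⟨v, ?_, Finset.mem_filter.mpr ⟨hjr, h3⟩⟩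
      rw [hSdef]
      exact Finset.mem_filter.mpr ⟨Finset.mem_univ v, h1, h2⟩
    have hcard2 : Tgt.card ≤ ∑ v ∈ S, ((Finset.range N').filter
        (fun j => (e (j + 1)).lvl v ≠ (e j).lvl v ∨ (e (j + 1)).prnt v ≠ (e j).prnt v)).card :=
      le_trans (Finset.card_le_card hsub) (Finset.card_biUnion_le)
    have hcard3 : ∑ v ∈ S, ((Finset.range N').filter
        (fun j => (e (j + 1)).lvl v ≠ (e j).lvl v ∨ (e (j + 1)).prnt v ≠ (e j).prnt v)).card
        ≤ ∑ v ∈ S, G.degree v := by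
      apply Finset.sum_le_sum
      intro v hv
      obtain ⟨-, h1, h2⟩ := Finset.mem_filter.mp (hSdef ▸ hv)
      exact hcore v h1 h2 N'
    have hcard4 : ∑ v ∈ S, G.degree v ≤ ∑ v : V, G.degree v :=
      Finset.sum_le_sum_of_subset (Finset.filter_subset _ _)
    calc F.card ≤ Tgt.card := hcard1
      _ ≤ _ := hcard2
      _ ≤ ∑ v ∈ S, G.degree v := hcard3
      _ ≤ ∑ v : V, G.degree v := hcard4
      _ = 2 * G.edgeFinset.card := G.sum_degrees_eq_twice_card_edges
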